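/- For C ∈ S₂(H₁ ⊗ H₂) and nonzero C₁ ∈ S₂(H₁), the quantity D(C₁) = ‖C‖₂² − ‖T₁(C, C₁)‖₂²/‖C₁‖₂² equals zero if and only if C = C₁ ⊗̃ C₂ for some C₂ ∈ S₂(H₂). -/

import Mathlib

open scoped InnerProductSpace
noncomputable section

/-- Hilbert–Schmidt inner product of two operators with respect to a Hilbert basis. -/
def hsInner {ι E : Type*} [NormedAddCommGroup E] [InnerProductSpace ℝ E]
    (b : HilbertBasis ι ℝ E) (A B : E →L[ℝ] E) : ℝ :=
  ∑' i, ⟪A (b i), B (b i)⟫_ℝ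

/-- Hilbert–Schmidt norm. -/
def hsNorm {ι E : Type*} [NormedAddCommGroup E] [InnerProductSpace ℝ E]
    (b : HilbertBasis ι ℝ E) (A : E →L[ℝ] E) : ℝ :=
  Real.sqrt (hsInner b A A)

/-- Being a Hilbert–Schmidt operator. -/
def IsHS {ι E : Type*} [NormedAddCommGroup E] [InnerProductSpace ℝ E]
    (b : HilbertBasis ι ℝ E) (A : E →L[ℝ] E) : Prop :=
  Summable fun i => ‖A (b i)‖ ^ 2

/-- A realization of the Hilbert space `H` as the Hilbert tensor product `H₁ ⊗ H₂`,
together with the operator tensor product `⊗̃`: `tmul` is bilinear with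
`⟪u ⊗ v, w ⊗ z⟫ = ⟪u,w⟫⟪v,z⟫`, elementary tensors span a dense subspace, and
`otimes C₁ C₂` is the bounded operator with `(C₁ ⊗̃ C₂)(u ⊗ v) = C₁ u ⊗ C₂ v`. -/
structure HilbertTensorProduct (H₁ H₂ H : Type*) [NormedAddCommGroup H₁]
    [InnerProductSpace ℝ H₁] [NormedAddCommGroup H₂] [InnerProductSpace ℝ H₂]
    [NormedAddCommGroup H] [InnerProductSpace ℝ H] : Type _ where
  tmul : H₁ →ₗ[ℝ] H₂ →ₗ[ℝ] H
  inner_tmul : ∀ (u w : H₁) (v z : H₂),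
    ⟪tmul u v, tmul w z⟫_ℝ = ⟪u, w⟫_ℝ * ⟪v, z⟫_ℝ
  dense_span : (Submodule.span ℝ
    (Set.range fun p : H₁ × H₂ => tmul p.1 p.2)).topologicalClosure = ⊤
  otimes : (H₁ →L[ℝ] H₁) → (H₂ →L[ℝ] H₂) → (H →L[ℝ] H)
  otimes_tmul : ∀ (C₁ : H₁ →L[ℝ] H₁) (C₂ : H₂ →L[ℝ] H₂) (u : H₁) (v : H₂),
    otimes C₁ C₂ (tmul u v) = tmul (C₁ u) (C₂ v)

variable {ι₁ ι₂ κ H₁ H₂ H : Type*}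
variable [NormedAddCommGroup H₁] [InnerProductSpace ℝ H₁] [CompleteSpace H₁]
variable [NormedAddCommGroup H₂] [InnerProductSpace ℝ H₂] [CompleteSpace H₂]
variable [NormedAddCommGroup H] [InnerProductSpace ℝ H] [CompleteSpace H]

/-- `T₁` is the partial-trace type map `S₂(H₁ ⊗ H₂) × S₂(H₁) → S₂(H₂)` determined by
`T₁(A ⊗̃ B, C₁) = ⟨A, C₁⟩ B`; it is characterized by mapping Hilbert–Schmidt operators to
Hilbert–Schmidt operators and the duality identity `⟨B, T₁(C,C₁)⟩ = ⟨C, C₁ ⊗̃ B⟩`. -/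
def IsT1 {ι₁ ι₂ κ H₁ H₂ H : Type*}
    [NormedAddCommGroup H₁] [InnerProductSpace ℝ H₁]
    [NormedAddCommGroup H₂] [InnerProductSpace ℝ H₂]
    [NormedAddCommGroup H] [InnerProductSpace ℝ H]
    (P : HilbertTensorProduct H₁ H₂ H)
    (b₁ : HilbertBasis ι₁ ℝ H₁) (b₂ : HilbertBasis ι₂ ℝ H₂) (b : HilbertBasis κ ℝ H)
    (T₁ : (H →L[ℝ] H) → (H₁ →L[ℝ] H₁) → (H₂ →L[ℝ] H₂)) : Prop :=
  (∀ C C₁, IsHS b C → IsHS b₁ C₁ → IsHS b₂ (T₁ C C₁)) ∧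
  (∀ C C₁ B, IsHS b C → IsHS b₁ C₁ → IsHS b₂ B →
      hsInner b₂ B (T₁ C C₁) = hsInner b C (P.otimes C₁ B))

/-- `T₂` is the map `S₂(H₁ ⊗ H₂) × S₂(H₂) → S₂(H₁)` determined by
`T₂(A ⊗̃ B, C₂) = ⟨B, C₂⟩ A`; characterized by `⟨A, T₂(C,C₂)⟩ = ⟨C, A ⊗̃ C₂⟩`. -/
def IsT2 {ι₁ ι₂ κ H₁ H₂ H : Type*}
    [NormedAddCommGroup H₁] [InnerProductSpace ℝ H₁]
    [NormedAddCommGroup H₂] [InnerProductSpace ℝ H₂]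
    [NormedAddCommGroup H] [InnerProductSpace ℝ H]
    (P : HilbertTensorProduct H₁ H₂ H)
    (b₁ : HilbertBasis ι₁ ℝ H₁) (b₂ : HilbertBasis ι₂ ℝ H₂) (b : HilbertBasis κ ℝ H)
    (T₂ : (H →L[ℝ] H) → (H₂ →L[ℝ] H₂) → (H₁ →L[ℝ] H₁)) : Prop :=
  (∀ C C₂, IsHS b C → IsHS b₂ C₂ → IsHS b₁ (T₂ C C₂)) ∧
  (∀ C C₂ A, IsHS b C → IsHS b₂ C₂ → IsHS b₁ A →
      hsInner b₁ A (T₂ C C₂) = hsInner b C (P.otimes A C₂))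


section HSLemmas

open Submodule ContinuousLinearMap

variable {α β F : Type*} [NormedAddCommGroup F] [InnerProductSpace ℝ F] [CompleteSpace F]
variable (c : HilbertBasis α ℝ F) (d : HilbertBasis β ℝ F)

lemma hasSum_inner_sq (x : F) : HasSum (fun m => ⟪x, d m⟫_ℝ ^ 2) (‖x‖ ^ 2) := by
  have h := d.hasSum_inner_mul_inner x x
  rw [real_inner_self_eq_norm_sq] at h
  refine HasSum.congr_fun h fun m => ?_
  rw [sq, real_inner_comm x (d m)]

lemma hsSummable_double {X : F →L[ℝ] F} (hX : IsHS c X) :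
    Summable (fun p : α × β => ⟪X (c p.1), d p.2⟫_ℝ ^ 2) := by
  rw [summable_prod_of_nonneg (fun p => sq_nonneg _)]
  refine ⟨fun k => (hasSum_inner_sq d (X (c k))).summable, ?_⟩
  have h : ∀ k, ∑' m, ⟪X (c k), d m⟫_ℝ ^ 2 = ‖X (c k)‖ ^ 2 :=
    fun k => (hasSum_inner_sq d (X (c k))).tsum_eq
  simpa only [h] using (show Summable fun k => ‖X (c k)‖ ^ 2 from hX)

lemma isHS_adjoint {X : F →L[ℝ] F} (hX : IsHS c X) : IsHS d (adjoint X) := by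
  have hs : Summable (fun p : β × α => ⟪(adjoint X) (d p.1), c p.2⟫_ℝ ^ 2) := by
    refine (hsSummable_double c d hX).prod_symm.congr fun p => ?_
    rw [ContinuousLinearMap.adjoint_inner_left, real_inner_comm]
    rfl
  exact (hs.hasSum.prod_fiberwise fun m => hasSum_inner_sq c ((adjoint X) (d m))).summable

lemma isHS_basis_indep {X : F →L[ℝ] F} (hX : IsHS c X) : IsHS d X := by
  have h2 := isHS_adjoint c d (isHS_adjoint c c hX)
  rwa [ContinuousLinearMap.adjoint_adjoint] at h2

lemma summable_hsInner {X Y : F →L[ℝ] F} (hX : IsHS c X) (hY : IsHS c Y) :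
    Summable fun k => ⟪X (c k), Y (c k)⟫_ℝ := by
  refine Summable.of_abs (Summable.of_nonneg_of_le (fun k => abs_nonneg _)
    (fun k => ?_) (hX.add hY))
  have h1 := abs_real_inner_le_norm (X (c k)) (Y (c k))
  nlinarith [sq_nonneg (‖X (c k)‖ - ‖Y (c k)‖), norm_nonneg (X (c k)), norm_nonneg (Y (c k))]

lemma hsInner_comm (X Y : F →L[ℝ] F) : hsInner c X Y = hsInner c Y X :=
  tsum_congr fun k => real_inner_comm _ _

lemma hsInner_smul_right (r : ℝ) (X Y : F →L[ℝ] F) :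
    hsInner c X (r • Y) = r * hsInner c X Y := by
  rw [hsInner, hsInner, ← tsum_mul_left]
  exact tsum_congr fun k => by
    rw [ContinuousLinearMap.smul_apply, real_inner_smul_right]

lemma hsInner_eq_adjoint {X Y : F →L[ℝ] F} (hX : IsHS c X) (hY : IsHS c Y) :
    hsInner c X Y = hsInner d (adjoint X) (adjoint Y) := by
  set f : α × β → ℝ := fun p => ⟪X (c p.1), d p.2⟫_ℝ * ⟪Y (c p.1), d p.2⟫_ℝ with hf
  have hfs : Summable f := by
    refine Summable.of_abs (Summable.of_nonneg_of_le (fun p => abs_nonneg _) (fun p => ?_)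
      ((hsSummable_double c d hX).add (hsSummable_double c d hY)))
    have := abs_mul (⟪X (c p.1), d p.2⟫_ℝ) (⟪Y (c p.1), d p.2⟫_ℝ)
    nlinarith [sq_nonneg (|⟪X (c p.1), d p.2⟫_ℝ| - |⟪Y (c p.1), d p.2⟫_ℝ|),
      abs_nonneg (⟪X (c p.1), d p.2⟫_ℝ), abs_nonneg (⟪Y (c p.1), d p.2⟫_ℝ),
      sq_abs (⟪X (c p.1), d p.2⟫_ℝ), sq_abs (⟪Y (c p.1), d p.2⟫_ℝ)]
  have hL : HasSum (fun k => ⟪X (c k), Y (c k)⟫_ℝ) (∑' p, f p) := by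
    refine hfs.hasSum.prod_fiberwise fun k => ?_
    have h0 := d.hasSum_inner_mul_inner (X (c k)) (Y (c k))
    refine HasSum.congr_fun h0 fun m => ?_
    simp only [hf]
    rw [real_inner_comm (Y (c k)) (d m)]
  have hR : HasSum (fun m => ⟪(adjoint X) (d m), (adjoint Y) (d m)⟫_ℝ) (∑' p, f p) := by
    have hswap : Summable fun p : β × α => f p.swap := hfs.prod_symm
    have hts : ∑' p : β × α, f p.swap = ∑' p, f p := by
      have := (Equiv.prodComm β α).tsum_eq f
      simpa [Function.comp] using this
    rw [← hts]
    refine hswap.hasSum.prod_fiberwise fun m => ?_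
    have h0 := c.hasSum_inner_mul_inner ((adjoint X) (d m)) ((adjoint Y) (d m))
    refine HasSum.congr_fun h0 fun k => ?_
    simp only [hf, Prod.swap_prod_mk]
    rw [ContinuousLinearMap.adjoint_inner_left, ContinuousLinearMap.adjoint_inner_right,
      real_inner_comm (d m) (X (c k))]
  exact hL.tsum_eq.trans hR.tsum_eq.symm

lemma hsInner_basis_change {X Y : F →L[ℝ] F} (hX : IsHS c X) (hY : IsHS c Y) :
    hsInner c X Y = hsInner d X Y := by
  rw [hsInner_eq_adjoint c d hX hY,
    ← hsInner_eq_adjoint d d (isHS_basis_indep c d hX) (isHS_basis_indep c d hY)]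

lemma hsInner_self_eq (X : F →L[ℝ] F) : hsInner c X X = ∑' k, ‖X (c k)‖ ^ 2 :=
  tsum_congr fun k => real_inner_self_eq_norm_sq _

lemma hsInner_self_nonneg (X : F →L[ℝ] F) : 0 ≤ hsInner c X X := by
  rw [hsInner_self_eq]
  exact tsum_nonneg fun k => sq_nonneg _

lemma eq_zero_of_hsInner_self {X : F →L[ℝ] F} (hX : IsHS c X)
    (h : hsInner c X X = 0) : X = 0 := by
  rw [hsInner_self_eq] at h
  have hz : ∀ k, X (c k) = 0 := by
    intro k
    have h1 : ‖X (c k)‖ ^ 2 ≤ 0 := by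
      rw [← h]
      exact Summable.le_tsum hX k fun j _ => sq_nonneg _
    have h2 : ‖X (c k)‖ ^ 2 = 0 := le_antisymm h1 (sq_nonneg _)
    have h3 : ‖X (c k)‖ = 0 := by
      have := sq_eq_zero_iff.mp h2
      exact this
    exact norm_eq_zero.mp h3
  refine ContinuousLinearMap.ext_on (s := Set.range c) ?_ ?_
  · rw [Submodule.dense_iff_topologicalClosure_eq_top]
    exact c.dense_span
  · rintro x ⟨k, rfl⟩
    simpa using hz k

lemma isHS_sub {X Y : F →L[ℝ] F} (hX : IsHS c X) (hY : IsHS c Y) : IsHS c (X - Y) := by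
  refine Summable.of_nonneg_of_le (fun k => sq_nonneg _) (fun k => ?_)
    ((hX.add hY).mul_left 2)
  rw [ContinuousLinearMap.sub_apply]
  nlinarith [norm_sub_le (X (c k)) (Y (c k)), norm_nonneg (X (c k) - Y (c k)),
    sq_nonneg (‖X (c k)‖ - ‖Y (c k)‖), norm_nonneg (X (c k)), norm_nonneg (Y (c k))]

lemma isHS_smul (r : ℝ) {X : F →L[ℝ] F} (hX : IsHS c X) : IsHS c (r • X) := by
  refine (hX.mul_left (r ^ 2)).congr fun k => ?_
  rw [ContinuousLinearMap.smul_apply, norm_smul, mul_pow, Real.norm_eq_abs, sq_abs]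

lemma hsInner_sub_sub {X Y : F →L[ℝ] F} (hX : IsHS c X) (hY : IsHS c Y) :
    hsInner c (X - Y) (X - Y) =
      hsInner c X X - 2 * hsInner c X Y + hsInner c Y Y := by
  have hXY := summable_hsInner c hX hY
  have hXX := summable_hsInner c hX hX
  have hYY := summable_hsInner c hY hY
  have e : ∀ k, ⟪(X - Y) (c k), (X - Y) (c k)⟫_ℝ =
      ⟪X (c k), X (c k)⟫_ℝ - 2 * ⟪X (c k), Y (c k)⟫_ℝ + ⟪Y (c k), Y (c k)⟫_ℝ := by
    intro k
    rw [ContinuousLinearMap.sub_apply, real_inner_sub_sub_self]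
  rw [hsInner, tsum_congr e,
    Summable.tsum_add (hXX.sub (hXY.mul_left 2)) hYY, Summable.tsum_sub hXX (hXY.mul_left 2), tsum_mul_left]
  rfl

end HSLemmas

section TensorLemmas

open Submodule

variable (P : HilbertTensorProduct H₁ H₂ H)
variable (b₁ : HilbertBasis ι₁ ℝ H₁) (b₂ : HilbertBasis ι₂ ℝ H₂)

lemma norm_tmul (u : H₁) (v : H₂) : ‖P.tmul u v‖ = ‖u‖ * ‖v‖ := by
  rw [norm_eq_sqrt_real_inner (P.tmul u v), P.inner_tmul,
    Real.sqrt_mul real_inner_self_nonneg, ← norm_eq_sqrt_real_inner,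
    ← norm_eq_sqrt_real_inner]

lemma tb_orthonormal :
    Orthonormal ℝ (fun p : ι₁ × ι₂ => P.tmul (b₁ p.1) (b₂ p.2)) := by
  classical
  rw [orthonormal_iff_ite]
  intro p q
  rw [P.inner_tmul, orthonormal_iff_ite.1 b₁.orthonormal p.1 q.1,
    orthonormal_iff_ite.1 b₂.orthonormal p.2 q.2]
  by_cases h1 : p.1 = q.1 <;> by_cases h2 : p.2 = q.2 <;>
    simp [h1, h2, Prod.ext_iff]

lemma tb_dense :
    ⊤ ≤ (span ℝ (Set.range fun p : ι₁ × ι₂ =>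
      P.tmul (b₁ p.1) (b₂ p.2))).topologicalClosure := by
  set S := (span ℝ (Set.range fun p : ι₁ × ι₂ =>
      P.tmul (b₁ p.1) (b₂ p.2))).topologicalClosure with hS
  have hS_closed : IsClosed (S : Set H) := Submodule.isClosed_topologicalClosure _
  have step1 : ∀ (i : ι₁) (v : H₂), P.tmul (b₁ i) v ∈ S := by
    intro i v
    have hf : Continuous (P.tmul (b₁ i)) := by
      refine AddMonoidHomClass.continuous_of_bound (P.tmul (b₁ i)) ‖b₁ i‖ fun w => ?_
      rw [norm_tmul]
    set K : Submodule ℝ H₂ := S.comap (P.tmul (b₁ i)) with hK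
    have hK_closed : IsClosed (K : Set H₂) := hS_closed.preimage hf
    have hKr : span ℝ (Set.range b₂) ≤ K := by
      rw [Submodule.span_le]
      rintro _ ⟨j, rfl⟩
      exact Submodule.le_topologicalClosure _ (Submodule.subset_span ⟨(i, j), rfl⟩)
    have hKtop : (⊤ : Submodule ℝ H₂) ≤ K := by
      rw [← b₂.dense_span]
      exact Submodule.topologicalClosure_minimal _ hKr hK_closed
    exact hKtop trivial
  have step2 : ∀ (u : H₁) (v : H₂), P.tmul u v ∈ S := by
    intro u v
    have hf : Continuous (P.tmul.flip v) := by
      refine AddMonoidHomClass.continuous_of_bound (P.tmul.flip v) ‖v‖ fun w => ?_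
      show ‖P.tmul w v‖ ≤ ‖v‖ * ‖w‖
      rw [norm_tmul, mul_comm]
    set K : Submodule ℝ H₁ := S.comap (P.tmul.flip v) with hK
    have hK_closed : IsClosed (K : Set H₁) := hS_closed.preimage hf
    have hKr : span ℝ (Set.range b₁) ≤ K := by
      rw [Submodule.span_le]
      rintro _ ⟨i, rfl⟩
      exact step1 i v
    have hKtop : (⊤ : Submodule ℝ H₁) ≤ K := by
      rw [← b₁.dense_span]
      exact Submodule.topologicalClosure_minimal _ hKr hK_closed
    exact hKtop trivial
  rw [← P.dense_span]
  refine Submodule.topologicalClosure_minimal _ ?_ hS_closed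
  rw [Submodule.span_le]
  rintro _ ⟨⟨u, v⟩, rfl⟩
  exact step2 u v

/-- The product Hilbert basis of the tensor product space. -/
def tensorBasis : HilbertBasis (ι₁ × ι₂) ℝ H :=
  HilbertBasis.mk (tb_orthonormal P b₁ b₂) (tb_dense P b₁ b₂)

lemma tensorBasis_apply (p : ι₁ × ι₂) :
    tensorBasis P b₁ b₂ p = P.tmul (b₁ p.1) (b₂ p.2) :=
  congrFun (HilbertBasis.coe_mk _ _) p

lemma isHS_otimes {A : H₁ →L[ℝ] H₁} {B : H₂ →L[ℝ] H₂}
    (hA : IsHS b₁ A) (hB : IsHS b₂ B) :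
    IsHS (tensorBasis P b₁ b₂) (P.otimes A B) := by
  refine (hA.mul_of_nonneg hB (fun k => sq_nonneg _) (fun k => sq_nonneg _)).congr
    fun p => ?_
  rw [tensorBasis_apply, P.otimes_tmul, norm_tmul, mul_pow]

lemma hsInner_otimes {A A' : H₁ →L[ℝ] H₁} {B B' : H₂ →L[ℝ] H₂}
    (hA : IsHS b₁ A) (hA' : IsHS b₁ A') (hB : IsHS b₂ B) (hB' : IsHS b₂ B') :
    hsInner (tensorBasis P b₁ b₂) (P.otimes A B) (P.otimes A' B') =
      hsInner b₁ A A' * hsInner b₂ B B' := by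
  set g : ι₁ → ℝ := fun k => ⟪A (b₁ k), A' (b₁ k)⟫_ℝ with hg
  set h : ι₂ → ℝ := fun j => ⟪B (b₂ j), B' (b₂ j)⟫_ℝ with hh
  have hgs : Summable g := summable_hsInner b₁ hA hA'
  have hhs : Summable h := summable_hsInner b₂ hB hB'
  have hpt : ∀ p : ι₁ × ι₂,
      ⟪P.otimes A B (tensorBasis P b₁ b₂ p), P.otimes A' B' (tensorBasis P b₁ b₂ p)⟫_ℝ =
        g p.1 * h p.2 := by
    intro p
    rw [tensorBasis_apply, P.otimes_tmul, P.otimes_tmul, P.inner_tmul]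
  have hfs : Summable fun p : ι₁ × ι₂ => g p.1 * h p.2 := by
    have hG : Summable fun k => |g k| := hgs.abs
    have hH : Summable fun j => |h j| := hhs.abs
    refine Summable.of_abs ?_
    refine (hG.mul_of_nonneg hH (fun k => abs_nonneg _) (fun j => abs_nonneg _)).congr
      fun p => ?_
    rw [abs_mul]
  rw [hsInner, tsum_congr hpt, Summable.tsum_prod' hfs (fun k => (hhs.mul_left (g k)))]
  simp only [tsum_mul_left]
  rw [tsum_mul_right]
  rfl

end TensorLemmas

/-- `D(C₁) = ‖C‖₂² − ‖T₁(C,C₁)‖₂²/‖C₁‖₂²` vanishes iff `C = C₁ ⊗̃ C₂`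
for some `C₂ ∈ S₂(H₂)`. -/
theorem stmt9 (P : HilbertTensorProduct H₁ H₂ H)
    (b₁ : HilbertBasis ι₁ ℝ H₁) (b₂ : HilbertBasis ι₂ ℝ H₂) (b : HilbertBasis κ ℝ H)
    (T₁ : (H →L[ℝ] H) → (H₁ →L[ℝ] H₁) → (H₂ →L[ℝ] H₂))
    (hT₁ : IsT1 P b₁ b₂ b T₁)
    (C : H →L[ℝ] H) (C₁ : H₁ →L[ℝ] H₁) (hC : IsHS b C) (hC₁ : IsHS b₁ C₁)
    (hC₁ne : C₁ ≠ 0) :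
    hsNorm b C ^ 2 - hsNorm b₂ (T₁ C C₁) ^ 2 / hsNorm b₁ C₁ ^ 2 = 0 ↔
      ∃ C₂ : H₂ →L[ℝ] H₂, IsHS b₂ C₂ ∧ C = P.otimes C₁ C₂ := by
  classical
  obtain ⟨hT_hs, hT_dual⟩ := hT₁
  have hn_pos : 0 < hsInner b₁ C₁ C₁ := by
    rcases (hsInner_self_nonneg b₁ C₁).lt_or_eq with hlt | heq
    · exact hlt
    · exact absurd (eq_zero_of_hsInner_self b₁ hC₁ heq.symm) hC₁ne
  set n : ℝ := hsInner b₁ C₁ C₁ with hn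
  set t := T₁ C C₁ with ht
  have hts : IsHS b₂ t := hT_hs C C₁ hC hC₁
  set τ : ℝ := hsInner b₂ t t with hτ
  have hNormC : hsNorm b C ^ 2 = hsInner b C C := Real.sq_sqrt (hsInner_self_nonneg b C)
  have hNormt : hsNorm b₂ t ^ 2 = τ := Real.sq_sqrt (hsInner_self_nonneg b₂ t)
  have hNormC₁ : hsNorm b₁ C₁ ^ 2 = n := Real.sq_sqrt (hsInner_self_nonneg b₁ C₁)
  set e := tensorBasis P b₁ b₂ with he
  set B₀ : H₂ →L[ℝ] H₂ := n⁻¹ • t with hB₀def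
  have hB₀ : IsHS b₂ B₀ := isHS_smul b₂ n⁻¹ hts
  set Eop := P.otimes C₁ B₀ with hEop
  have hEe : IsHS e Eop := isHS_otimes P b₁ b₂ hC₁ hB₀
  have hEb : IsHS b Eop := isHS_basis_indep e b hEe
  have hB₀t : hsInner b₂ B₀ t = n⁻¹ * τ := by
    rw [hsInner_comm, hB₀def, hsInner_smul_right, hτ]
  have hCE : hsInner b C Eop = n⁻¹ * τ := by
    rw [hEop, ← hT_dual C C₁ B₀ hC hC₁ hB₀, ← ht, hB₀t]
  have hB₀B₀ : hsInner b₂ B₀ B₀ = n⁻¹ * (n⁻¹ * τ) := by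
    rw [hB₀def, hsInner_smul_right, hsInner_comm, hsInner_smul_right, hτ]
  have hEE : hsInner b Eop Eop = n⁻¹ * τ := by
    rw [← hsInner_basis_change e b hEe hEe, hEop, hsInner_otimes P b₁ b₂ hC₁ hC₁ hB₀ hB₀,
      hB₀B₀, ← hn]
    field_simp
  have key : hsNorm b C ^ 2 - hsNorm b₂ t ^ 2 / hsNorm b₁ C₁ ^ 2 =
      hsInner b (C - Eop) (C - Eop) := by
    rw [hsInner_sub_sub b hC hEb, hCE, hEE, hNormC, hNormt, hNormC₁]
    field_simp
    ring
  constructor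
  · intro h0
    rw [key] at h0
    have hCeq : C - Eop = 0 := eq_zero_of_hsInner_self b (isHS_sub b hC hEb) h0
    exact ⟨B₀, hB₀, by rw [← sub_eq_zero]; exact hCeq⟩
  · rintro ⟨C₂, hC₂, hCeq⟩
    set q : ℝ := hsInner b₂ C₂ C₂ with hq
    have hOe : IsHS e (P.otimes C₁ C₂) := isHS_otimes P b₁ b₂ hC₁ hC₂
    have hOte : IsHS e (P.otimes C₁ t) := isHS_otimes P b₁ b₂ hC₁ hts
    have hCC : hsInner b C C = n * q := by
      rw [hCeq, ← hsInner_basis_change e b hOe hOe,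
        hsInner_otimes P b₁ b₂ hC₁ hC₁ hC₂ hC₂, ← hn, ← hq]
    have hC₂t : hsInner b₂ C₂ t = n * q := by
      rw [ht, hT_dual C C₁ C₂ hC hC₁ hC₂, hCeq, ← hsInner_basis_change e b hOe hOe,
        hsInner_otimes P b₁ b₂ hC₁ hC₁ hC₂ hC₂, ← hn, ← hq]
    have hττ : τ = n * (n * q) := by
      rw [hτ, ht, hT_dual C C₁ t hC hC₁ hts, hCeq, ← hsInner_basis_change e b hOe hOte,
        hsInner_otimes P b₁ b₂ hC₁ hC₁ hC₂ hts, ← hn, hC₂t]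
    rw [hNormC, hNormt, hNormC₁, hCC, hττ]
    field_simp
    ring
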